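/- Gaussian Poincaré inequality: if Z ~ N(0,1) and f ∈ C^1(ℝ) with f and f' in L²(γ) where γ is the standard Gaussian measure, then Var(f(Z)) ≤ E[(f'(Z))²]. -/

import Mathlib

open MeasureTheory ProbabilityTheory Real Set Filter
open scoped ENNReal NNReal

namespace GPoincare

lemma phi_eq (x : ℝ) :
    gaussianPDFReal 0 1 x = (Real.sqrt (2 * π))⁻¹ * Real.exp (-(x ^ 2) / 2) := by
  simp [gaussianPDFReal]

lemma phi_nonneg (x : ℝ) : 0 ≤ gaussianPDFReal 0 1 x := gaussianPDFReal_nonneg 0 1 x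

lemma hasDerivAt_neg_phi (x : ℝ) :
    HasDerivAt (fun y => -gaussianPDFReal 0 1 y) (x * gaussianPDFReal 0 1 x) x := by
  have hfun : (fun y => -gaussianPDFReal 0 1 y)
      = fun y => -((Real.sqrt (2 * π))⁻¹ * Real.exp (-(y ^ 2) / 2)) := by
    funext y; rw [phi_eq]
  rw [hfun, phi_eq]
  have h1 : HasDerivAt (fun y : ℝ => -(y ^ 2) / 2) (-x) x := by
    have : HasDerivAt (fun y : ℝ => -(y ^ 2) / 2) (-((2:ℕ) * x ^ (2 - 1)) / 2) x :=
      (hasDerivAt_pow 2 x).neg.div_const 2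
    convert this using 1
    simp; ring
  have h2 : HasDerivAt (fun y => -((Real.sqrt (2 * π))⁻¹ * Real.exp (-(y ^ 2) / 2)))
      (-((Real.sqrt (2 * π))⁻¹ * (Real.exp (-(x ^ 2) / 2) * -x))) x :=
    (h1.exp.const_mul ((Real.sqrt (2 * π))⁻¹)).neg
  convert h2 using 1
  ring

lemma tendsto_phi_atTop : Tendsto (gaussianPDFReal 0 1) atTop (nhds 0) := by
  have h : Tendsto (fun x : ℝ => -(x ^ 2) / 2) atTop atBot := by
    apply Filter.Tendsto.atBot_div_const (by norm_num)
    exact Filter.tendsto_neg_atTop_atBot.comp (tendsto_pow_atTop two_ne_zero)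
  have h2 : Tendsto (fun x : ℝ => Real.exp (-(x ^ 2) / 2)) atTop (nhds 0) :=
    Real.tendsto_exp_atBot.comp h
  have h3 := h2.const_mul ((Real.sqrt (2 * π))⁻¹)
  rw [mul_zero] at h3
  exact Tendsto.congr (fun x => (phi_eq x).symm) h3

lemma tendsto_phi_atBot : Tendsto (gaussianPDFReal 0 1) atBot (nhds 0) := by
  have h : Tendsto (fun x : ℝ => -(x ^ 2) / 2) atBot atBot := by
    apply Filter.Tendsto.atBot_div_const (by norm_num)
    apply Filter.tendsto_neg_atTop_atBot.comp
    have := (tendsto_pow_atTop (two_ne_zero (α := ℕ))).comp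
      (Filter.tendsto_neg_atBot_atTop (G := ℝ))
    exact Tendsto.congr (fun x => by simp) this
  have h2 : Tendsto (fun x : ℝ => Real.exp (-(x ^ 2) / 2)) atBot (nhds 0) :=
    Real.tendsto_exp_atBot.comp h
  have h3 := h2.const_mul ((Real.sqrt (2 * π))⁻¹)
  rw [mul_zero] at h3
  exact Tendsto.congr (fun x => (phi_eq x).symm) h3

lemma integrable_id_mul_phi : Integrable (fun x => x * gaussianPDFReal 0 1 x) := by
  have h := (integrable_mul_exp_neg_mul_sq (by norm_num : (0:ℝ) < 1/2)).const_mul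
    ((Real.sqrt (2 * π))⁻¹)
  refine h.congr (Eventually.of_forall fun x => ?_)
  simp only []
  rw [phi_eq]
  have : -(1/2 : ℝ) * x ^ 2 = -(x ^ 2) / 2 := by ring
  rw [this]
  ring

lemma integrable_phi : Integrable (gaussianPDFReal 0 1) := integrable_gaussianPDFReal 0 1

lemma integral_Ioi_id_mul_phi (t : ℝ) :
    ∫ x in Ioi t, x * gaussianPDFReal 0 1 x = gaussianPDFReal 0 1 t := by
  have := integral_Ioi_of_hasDerivAt_of_tendsto' (a := t)
    (fun x _ => hasDerivAt_neg_phi x) integrable_id_mul_phi.integrableOn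
    (m := 0) (by simpa using tendsto_phi_atTop.neg)
  simpa using this

lemma integral_Iic_id_mul_phi (t : ℝ) :
    ∫ x in Iic t, x * gaussianPDFReal 0 1 x = -gaussianPDFReal 0 1 t := by
  have := integral_Iic_of_hasDerivAt_of_tendsto' (a := t)
    (fun x _ => hasDerivAt_neg_phi x) integrable_id_mul_phi.integrableOn
    (m := 0) (by simpa using tendsto_phi_atBot.neg)
  simpa using this


lemma phi_le (x : ℝ) : gaussianPDFReal 0 1 x ≤ (Real.sqrt (2 * π))⁻¹ := by
  rw [phi_eq]
  exact mul_le_of_le_one_right (by positivity)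
    (Real.exp_le_one_iff.2 (by nlinarith [sq_nonneg x]))

/-- helper: lintegral over the gaussian of an indicator of a nonneg function. -/
lemma lintegral_indicator_gauss {s : Set ℝ} (hs : MeasurableSet s) (g : ℝ → ℝ)
    (hg : Measurable g) (hgnn : ∀ x ∈ s, 0 ≤ g x)
    (hgi : IntegrableOn (fun x => g x * gaussianPDFReal 0 1 x) s) :
    ∫⁻ x, s.indicator (fun x => ENNReal.ofReal (g x)) x ∂(gaussianReal 0 1)
      = ENNReal.ofReal (∫ x in s, g x * gaussianPDFReal 0 1 x) := by
  rw [gaussianReal_of_var_ne_zero 0 one_ne_zero,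
    lintegral_withDensity_eq_lintegral_mul _ (measurable_gaussianPDF 0 1)
      ((hg.ennreal_ofReal).indicator hs)]
  have heq : (fun x => ((gaussianPDF 0 1) * fun x => s.indicator (fun x => ENNReal.ofReal (g x)) x) x)
      = s.indicator (fun x => ENNReal.ofReal (g x * gaussianPDFReal 0 1 x)) := by
    funext x
    by_cases hx : x ∈ s
    · simp only [Pi.mul_apply, Set.indicator_of_mem hx, gaussianPDF]
      rw [← ENNReal.ofReal_mul (phi_nonneg x), mul_comm]
    · simp [Set.indicator_of_notMem hx]
  rw [heq, lintegral_indicator hs,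
    ← ofReal_integral_eq_lintegral_ofReal hgi
      ((ae_restrict_iff' hs).2 (Eventually.of_forall fun x hx =>
        mul_nonneg (hgnn x hx) (phi_nonneg x)))]

lemma lintegral_indicator_one_gauss {s : Set ℝ} (hs : MeasurableSet s) :
    ∫⁻ x, s.indicator (fun _ => (1:ℝ≥0∞)) x ∂(gaussianReal 0 1)
      = ENNReal.ofReal (∫ x in s, gaussianPDFReal 0 1 x) := by
  have h := lintegral_indicator_gauss hs (fun _ => (1:ℝ)) measurable_const
    (fun _ _ => zero_le_one)
    ((integrable_phi.congr (Eventually.of_forall fun x => by simp)).integrableOn)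
  simp only [ENNReal.ofReal_one, one_mul] at h
  exact h

lemma region1 (t : ℝ) :
    ∫⁻ p : ℝ × ℝ, ((Ici t ×ˢ Iio t).indicator (fun q => ENNReal.ofReal (q.1 - q.2)) p)
        ∂((gaussianReal 0 1).prod (gaussianReal 0 1))
      = ENNReal.ofReal (gaussianPDFReal 0 1 t) := by
  have hsplit : ∀ p : ℝ × ℝ,
      (Ici t ×ˢ Iio t).indicator (fun q => ENNReal.ofReal (q.1 - q.2)) p
        = ((Ici t).indicator (fun x => ENNReal.ofReal (x - t)) p.1)
            * ((Iio t).indicator (fun _ => 1) p.2)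
          + ((Ici t).indicator (fun _ => 1) p.1)
            * ((Iio t).indicator (fun y => ENNReal.ofReal (t - y)) p.2) := by
    rintro ⟨x, y⟩
    simp only [Set.indicator_apply, Set.mem_prod]
    by_cases hx : x ∈ Ici t <;> by_cases hy : y ∈ Iio t <;>
      simp [hx, hy]
    rw [← ENNReal.ofReal_add (by simp at hx; linarith) (by simp at hy; linarith)]
    congr 1
    ring
  have ma : Measurable (fun x : ℝ => (Ici t).indicator (fun x => ENNReal.ofReal (x - t)) x) :=
    Measurable.indicator (by fun_prop) measurableSet_Ici
  have mb : Measurable (fun y : ℝ => (Iio t).indicator (fun _ : ℝ => (1 : ℝ≥0∞)) y) :=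
    Measurable.indicator measurable_const measurableSet_Iio
  have mc : Measurable (fun x : ℝ => (Ici t).indicator (fun _ : ℝ => (1 : ℝ≥0∞)) x) :=
    Measurable.indicator measurable_const measurableSet_Ici
  have md : Measurable (fun y : ℝ => (Iio t).indicator (fun y => ENNReal.ofReal (t - y)) y) :=
    Measurable.indicator (by fun_prop) measurableSet_Iio
  have mfst : Measurable fun p : ℝ × ℝ =>
      (Ici t).indicator (fun x => ENNReal.ofReal (x - t)) p.1
        * (Iio t).indicator (fun _ => (1:ℝ≥0∞)) p.2 :=
    (ma.comp measurable_fst).mul (mb.comp measurable_snd)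
  rw [lintegral_congr hsplit, lintegral_add_left mfst,
    lintegral_prod_mul ma.aemeasurable mb.aemeasurable,
    lintegral_prod_mul mc.aemeasurable md.aemeasurable,
    lintegral_indicator_gauss measurableSet_Ici _ (by fun_prop)
      (fun x hx => by simpa using sub_nonneg.2 (mem_Ici.1 hx))
      (((integrable_id_mul_phi.sub (integrable_phi.const_mul t)).congr
        (Eventually.of_forall fun x => by simp; ring)).integrableOn),
    lintegral_indicator_one_gauss measurableSet_Iio,
    lintegral_indicator_one_gauss measurableSet_Ici,
    lintegral_indicator_gauss measurableSet_Iio _ (by fun_prop)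
      (fun y hy => by simpa using (le_of_lt hy))
      ((((integrable_phi.const_mul t).sub integrable_id_mul_phi).congr
        (Eventually.of_forall fun x => by simp; ring)).integrableOn)]
  set P := ∫ x in Ici t, gaussianPDFReal 0 1 x with hP
  set Q := ∫ y in Iio t, gaussianPDFReal 0 1 y with hQ
  have hPn : 0 ≤ P := setIntegral_nonneg measurableSet_Ici fun x _ => phi_nonneg x
  have hQn : 0 ≤ Q := setIntegral_nonneg measurableSet_Iio fun x _ => phi_nonneg x
  have haR : ∫ x in Ici t, (x - t) * gaussianPDFReal 0 1 x = gaussianPDFReal 0 1 t - t * P := by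
    have he : ∀ x : ℝ, (x - t) * gaussianPDFReal 0 1 x
        = x * gaussianPDFReal 0 1 x - t * gaussianPDFReal 0 1 x := fun x => by ring
    simp_rw [he]
    rw [integral_sub integrable_id_mul_phi.integrableOn
      (integrable_phi.const_mul t).integrableOn, integral_const_mul, ← hP,
      MeasureTheory.integral_Ici_eq_integral_Ioi, integral_Ioi_id_mul_phi]
  have hbR : ∫ y in Iio t, (t - y) * gaussianPDFReal 0 1 y = t * Q + gaussianPDFReal 0 1 t := by
    have he : ∀ y : ℝ, (t - y) * gaussianPDFReal 0 1 y
        = t * gaussianPDFReal 0 1 y - y * gaussianPDFReal 0 1 y := fun y => by ring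
    simp_rw [he]
    rw [integral_sub (integrable_phi.const_mul t).integrableOn
      integrable_id_mul_phi.integrableOn, integral_const_mul, ← hQ,
      ← MeasureTheory.integral_Iic_eq_integral_Iio, integral_Iic_id_mul_phi]
    ring
  have haRn : 0 ≤ ∫ x in Ici t, (x - t) * gaussianPDFReal 0 1 x :=
    setIntegral_nonneg measurableSet_Ici fun x hx =>
      mul_nonneg (by simpa using sub_nonneg.2 (mem_Ici.1 hx)) (phi_nonneg x)
  have hPQ : P + Q = 1 := by
    rw [hP, hQ, ← compl_Ici (a := t)]
    rw [integral_add_compl measurableSet_Ici integrable_phi,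
      integral_gaussianPDFReal_eq_one 0 one_ne_zero]
  have hbRn : 0 ≤ t * Q + gaussianPDFReal 0 1 t := by
    rw [← hbR]
    exact setIntegral_nonneg measurableSet_Iio fun y hy =>
      mul_nonneg (by simp at hy; linarith) (phi_nonneg y)
  rw [haR] at haRn
  rw [haR, hbR, ← ENNReal.ofReal_mul haRn, ← ENNReal.ofReal_mul hPn,
    ← ENNReal.ofReal_add (mul_nonneg haRn hQn) (mul_nonneg hPn hbRn)]
  congr 1
  linear_combination gaussianPDFReal 0 1 t * hPQ

lemma region2 (t : ℝ) :
    ∫⁻ p : ℝ × ℝ, ((Iio t ×ˢ Ici t).indicator (fun q => ENNReal.ofReal (q.2 - q.1)) p)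
        ∂((gaussianReal 0 1).prod (gaussianReal 0 1))
      = ENNReal.ofReal (gaussianPDFReal 0 1 t) := by
  have mF : Measurable ((Ici t ×ˢ Iio t).indicator fun q : ℝ × ℝ => ENNReal.ofReal (q.1 - q.2)) :=
    Measurable.indicator (by fun_prop) (measurableSet_Ici.prod measurableSet_Iio)
  have h : (fun p : ℝ × ℝ => (Iio t ×ˢ Ici t).indicator (fun q => ENNReal.ofReal (q.2 - q.1)) p)
      = fun p : ℝ × ℝ =>
        ((Ici t ×ˢ Iio t).indicator (fun q => ENNReal.ofReal (q.1 - q.2)) (Prod.swap p)) := by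
    funext p
    rcases p with ⟨x, y⟩
    simp only [Set.indicator_apply, Set.mem_prod, Prod.swap, Prod.fst, Prod.snd, mem_Ici, mem_Iio]
    by_cases hx : x < t <;> by_cases hy : t ≤ y <;> simp [hx, hy]
  rw [h, ← lintegral_map mF measurable_swap, Measure.prod_swap]
  exact region1 t

lemma claim_indicator (g : ℝ → ℝ≥0∞) (p : ℝ × ℝ) (s : ℝ) :
    (Set.uIoc p.2 p.1).indicator (fun s => ENNReal.ofReal |p.1 - p.2| * g s) s
      = g s * (((Ici s ×ˢ Iio s).indicator (fun q => ENNReal.ofReal (q.1 - q.2)) p)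
          + ((Iio s ×ˢ Ici s).indicator (fun q => ENNReal.ofReal (q.2 - q.1)) p)) := by
  rcases p with ⟨x, y⟩
  by_cases hx : s ≤ x <;> by_cases hy : y < s
  · simp [Set.indicator_apply, Set.mem_uIoc, hx, hy, not_lt.2 hx, not_le.2 hy,
      abs_of_nonneg (sub_nonneg.2 (hy.le.trans hx)), mul_comm]
  · simp [Set.indicator_apply, Set.mem_uIoc, hy, not_lt.2 hx]
  · simp [Set.indicator_apply, Set.mem_uIoc, hy, hx, not_le.2 hy]
  · have hx' : x < s := not_le.1 hx
    have hy' : s ≤ y := not_lt.1 hy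
    simp [Set.indicator_apply, Set.mem_uIoc, hx', hy', not_le.2 hx', not_lt.2 hy',
      abs_of_nonpos (by linarith : x - y ≤ 0), neg_sub, mul_comm]

lemma master (g : ℝ → ℝ≥0∞) (hg : Measurable g) :
    ∫⁻ p : ℝ × ℝ, (∫⁻ s in Set.uIoc p.2 p.1, ENNReal.ofReal |p.1 - p.2| * g s ∂volume)
        ∂((gaussianReal 0 1).prod (gaussianReal 0 1))
      = 2 * ∫⁻ s, g s ∂(gaussianReal 0 1) := by
  have hval1 : ∀ z : (ℝ × ℝ) × ℝ,
      (Ici z.2 ×ˢ Iio z.2).indicator (fun q => ENNReal.ofReal (q.1 - q.2)) z.1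
        = {w : (ℝ × ℝ) × ℝ | w.2 ≤ w.1.1 ∧ w.1.2 < w.2}.indicator
            (fun w => ENNReal.ofReal (w.1.1 - w.1.2)) z := by
    rintro ⟨⟨x, y⟩, s⟩
    simp [Set.indicator_apply, Set.mem_prod]
  have hval2 : ∀ z : (ℝ × ℝ) × ℝ,
      (Iio z.2 ×ˢ Ici z.2).indicator (fun q => ENNReal.ofReal (q.2 - q.1)) z.1
        = {w : (ℝ × ℝ) × ℝ | w.1.1 < w.2 ∧ w.2 ≤ w.1.2}.indicator
            (fun w => ENNReal.ofReal (w.1.2 - w.1.1)) z := by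
    rintro ⟨⟨x, y⟩, s⟩
    simp [Set.indicator_apply, Set.mem_prod, and_comm]
  have m1 : Measurable fun z : (ℝ × ℝ) × ℝ =>
      (Ici z.2 ×ˢ Iio z.2).indicator (fun q => ENNReal.ofReal (q.1 - q.2)) z.1 := by
    simp_rw [hval1]
    exact Measurable.indicator (by fun_prop)
      ((measurableSet_le measurable_snd (measurable_fst.fst)).inter
        (measurableSet_lt (measurable_fst.snd) measurable_snd))
  have m2 : Measurable fun z : (ℝ × ℝ) × ℝ =>
      (Iio z.2 ×ˢ Ici z.2).indicator (fun q => ENNReal.ofReal (q.2 - q.1)) z.1 := by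
    simp_rw [hval2]
    exact Measurable.indicator (by fun_prop)
      ((measurableSet_lt (measurable_fst.fst) measurable_snd).inter
        (measurableSet_le measurable_snd (measurable_fst.snd)))
  have hmeas : AEMeasurable (Function.uncurry fun (p : ℝ × ℝ) (s : ℝ) =>
      g s * (((Ici s ×ˢ Iio s).indicator (fun q => ENNReal.ofReal (q.1 - q.2)) p)
          + ((Iio s ×ˢ Ici s).indicator (fun q => ENNReal.ofReal (q.2 - q.1)) p)))
      (((gaussianReal 0 1).prod (gaussianReal 0 1)).prod volume) :=
    ((hg.comp measurable_snd).mul (m1.add m2)).aemeasurable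
  have hrw : ∀ p : ℝ × ℝ,
      (∫⁻ s in Set.uIoc p.2 p.1, ENNReal.ofReal |p.1 - p.2| * g s ∂volume)
        = ∫⁻ s, g s * (((Ici s ×ˢ Iio s).indicator (fun q => ENNReal.ofReal (q.1 - q.2)) p)
            + ((Iio s ×ˢ Ici s).indicator (fun q => ENNReal.ofReal (q.2 - q.1)) p)) ∂volume := by
    intro p
    rw [← lintegral_indicator measurableSet_uIoc]
    exact lintegral_congr (claim_indicator g p)
  rw [lintegral_congr hrw, lintegral_lintegral_swap hmeas]
  have hinner : ∀ s : ℝ,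
      ∫⁻ p : ℝ × ℝ, g s * (((Ici s ×ˢ Iio s).indicator (fun q => ENNReal.ofReal (q.1 - q.2)) p)
          + ((Iio s ×ˢ Ici s).indicator (fun q => ENNReal.ofReal (q.2 - q.1)) p))
        ∂((gaussianReal 0 1).prod (gaussianReal 0 1))
      = g s * (2 * ENNReal.ofReal (gaussianPDFReal 0 1 s)) := by
    intro s
    rw [lintegral_const_mul (f := fun p : ℝ × ℝ => (Ici s ×ˢ Iio s).indicator (fun q => ENNReal.ofReal (q.1 - q.2)) p
        + (Iio s ×ˢ Ici s).indicator (fun q => ENNReal.ofReal (q.2 - q.1)) p) _ ((Measurable.indicator (f := fun q : ℝ × ℝ => ENNReal.ofReal (q.1 - q.2)) (by fun_prop)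
        (measurableSet_Ici.prod measurableSet_Iio)).add
      (Measurable.indicator (f := fun q : ℝ × ℝ => ENNReal.ofReal (q.2 - q.1)) (by fun_prop) (measurableSet_Iio.prod measurableSet_Ici))),
      lintegral_add_left (Measurable.indicator (f := fun q : ℝ × ℝ => ENNReal.ofReal (q.1 - q.2)) (by fun_prop)
        (measurableSet_Ici.prod measurableSet_Iio)), region1 s, region2 s, two_mul]
  rw [lintegral_congr hinner]
  rw [gaussianReal_of_var_ne_zero 0 one_ne_zero,
    lintegral_withDensity_eq_lintegral_mul _ (measurable_gaussianPDF 0 1) hg,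
    ← lintegral_const_mul 2 (show Measurable ((gaussianPDF 0 1) * fun s => g s) from
      (measurable_gaussianPDF 0 1).mul hg)]
  refine lintegral_congr fun s => ?_
  simp only [Pi.mul_apply, gaussianPDF]
  ring

lemma sq_setIntegral_le {a b : ℝ} (hab : a ≤ b) {d : ℝ → ℝ} (hd : Continuous d) :
    (∫ t in Ioc a b, d t) ^ 2 ≤ (b - a) * ∫ t in Ioc a b, (d t) ^ 2 := by
  set μ := volume.restrict (Ioc a b) with hμ
  haveI : IsFiniteMeasure μ := ⟨by
    rw [hμ, Measure.restrict_apply_univ, Real.volume_Ioc]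
    exact ENNReal.ofReal_lt_top⟩
  have hsqint : Integrable (fun t => d t ^ 2) μ := by
    rw [hμ, ← IntegrableOn]
    exact ((hd.pow 2).integrableOn_Icc).mono_set Ioc_subset_Icc_self
  have habs : Integrable (fun t => |d t| ^ 2) μ :=
    hsqint.congr (Eventually.of_forall fun t => (sq_abs (d t)).symm)
  have hmem : MemLp (fun t => |d t|) (ENNReal.ofReal 2) μ := by
    have : (ENNReal.ofReal 2) = 2 := by norm_num
    rw [this, memLp_two_iff_integrable_sq (hd.abs.aestronglyMeasurable.restrict)]
    exact habs
  have hone : MemLp (fun _ : ℝ => (1 : ℝ)) (ENNReal.ofReal 2) μ := memLp_const 1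
  have hconj : Real.HolderConjugate 2 2 := Real.HolderConjugate.two_two
  have hH := integral_mul_le_Lp_mul_Lq_of_nonneg hconj
    (Eventually.of_forall fun t => abs_nonneg (d t))
    (Eventually.of_forall fun _ => zero_le_one) hmem hone
  simp only [mul_one] at hH
  have hrw1 : ∫ t, |d t| ^ (2:ℝ) ∂μ = ∫ t, d t ^ 2 ∂μ := by
    refine integral_congr_ae (Eventually.of_forall fun t => ?_)
    show |d t| ^ (2:ℝ) = d t ^ 2
    rw [show ((2:ℝ)) = ((2:ℕ):ℝ) by norm_num, Real.rpow_natCast, sq_abs]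
  have hrw2 : ∫ t, (1:ℝ) ^ (2:ℝ) ∂μ = b - a := by
    have : ∀ t : ℝ, (1:ℝ) ^ (2:ℝ) = (1:ℝ) := fun t => Real.one_rpow 2
    rw [integral_congr_ae (Eventually.of_forall fun t => this t), integral_const, smul_eq_mul,
      mul_one, hμ, measureReal_def, Measure.restrict_apply_univ, Real.volume_Ioc,
      ENNReal.toReal_ofReal (by linarith)]
  rw [hrw1, hrw2] at hH
  have hIabs : |∫ t, d t ∂μ| ≤ ∫ t, |d t| ∂μ := by
    have := norm_integral_le_integral_norm (μ := μ) d
    simpa [Real.norm_eq_abs] using this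
  have hnn1 : 0 ≤ ∫ t, d t ^ 2 ∂μ := integral_nonneg fun t => sq_nonneg _
  have hle : |∫ t, d t ∂μ| ≤ Real.sqrt (∫ t, d t ^ 2 ∂μ) * Real.sqrt (b - a) := by
    rw [Real.sqrt_eq_rpow, Real.sqrt_eq_rpow]
    exact le_trans hIabs hH
  have hkey : |∫ t, d t ∂μ| ^ 2
      ≤ Real.sqrt (∫ t, d t ^ 2 ∂μ) ^ 2 * Real.sqrt (b - a) ^ 2 := by
    rw [← mul_pow]
    exact pow_le_pow_left₀ (abs_nonneg _) hle 2
  rw [Real.sq_sqrt hnn1, Real.sq_sqrt (by linarith : (0:ℝ) ≤ b - a), sq_abs] at hkey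
  linarith

lemma pointwise_bound {f : ℝ → ℝ} (hf : ContDiff ℝ 1 f) (x y : ℝ) :
    ENNReal.ofReal ((f x - f y) ^ 2)
      ≤ ∫⁻ s in Set.uIoc y x, ENNReal.ofReal |x - y| * ENNReal.ofReal ((deriv f s) ^ 2)
          ∂volume := by
  have hd : Continuous (deriv f) := hf.continuous_deriv le_rfl
  have hdiff : ∀ z ∈ Set.uIcc y x, DifferentiableAt ℝ f z :=
    fun z _ => (hf.differentiable one_ne_zero).differentiableAt
  have hftc : f x - f y = ∫ t in y..x, deriv f t :=
    (intervalIntegral.integral_deriv_eq_sub hdiff (hd.intervalIntegrable y x)).symm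
  have key : ∀ a b : ℝ, a ≤ b →
      ENNReal.ofReal ((∫ t in Ioc a b, deriv f t) ^ 2)
        ≤ ∫⁻ s in Ioc a b, ENNReal.ofReal (b - a) * ENNReal.ofReal ((deriv f s) ^ 2) ∂volume := by
    intro a b hab
    have hcs := sq_setIntegral_le hab hd
    have hint : IntegrableOn (fun s => (b - a) * (deriv f s) ^ 2) (Ioc a b) :=
      (((hd.pow 2).integrableOn_Icc).mono_set Ioc_subset_Icc_self).const_mul _
    calc ENNReal.ofReal ((∫ t in Ioc a b, deriv f t) ^ 2)
        ≤ ENNReal.ofReal ((b - a) * ∫ s in Ioc a b, (deriv f s) ^ 2) :=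
          ENNReal.ofReal_le_ofReal (by simpa using hcs)
      _ = ENNReal.ofReal (∫ s in Ioc a b, (b - a) * (deriv f s) ^ 2) := by
          rw [integral_const_mul]
      _ = ∫⁻ s in Ioc a b, ENNReal.ofReal ((b - a) * (deriv f s) ^ 2) ∂volume :=
          ofReal_integral_eq_lintegral_ofReal hint
            ((ae_restrict_iff' measurableSet_Ioc).2 (Eventually.of_forall fun s _ =>
              mul_nonneg (by linarith) (sq_nonneg _)))
      _ = ∫⁻ s in Ioc a b, ENNReal.ofReal (b - a) * ENNReal.ofReal ((deriv f s) ^ 2) ∂volume :=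
          lintegral_congr fun s => ENNReal.ofReal_mul (by linarith)
  rcases le_total y x with hxy | hxy
  · rw [Set.uIoc_of_le hxy, abs_of_nonneg (by linarith : (0:ℝ) ≤ x - y)]
    rw [hftc, intervalIntegral.integral_of_le hxy]
    exact key y x hxy
  · rw [Set.uIoc_of_ge hxy, abs_of_nonpos (by linarith : x - y ≤ 0)]
    have : f x - f y = -(∫ t in Ioc x y, deriv f t) := by
      rw [hftc, intervalIntegral.integral_of_ge hxy]
    rw [this, neg_sq, neg_sub]
    exact key x y hxy

lemma variance_identity {f : ℝ → ℝ} (hf1 : Integrable f (gaussianReal 0 1))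
    (hf2 : Integrable (fun x => f x ^ 2) (gaussianReal 0 1)) :
    ∫ x, f x ^ 2 ∂(gaussianReal 0 1) - (∫ x, f x ∂(gaussianReal 0 1)) ^ 2
      = (1/2) * ∫ p : ℝ × ℝ, (f p.1 - f p.2) ^ 2
          ∂((gaussianReal 0 1).prod (gaussianReal 0 1)) := by
  have hprod : Integrable (fun p : ℝ × ℝ => f p.1 * f p.2)
      ((gaussianReal 0 1).prod (gaussianReal 0 1)) := hf1.mul_prod hf1
  have hsq1 : Integrable (fun p : ℝ × ℝ => f p.1 ^ 2)
      ((gaussianReal 0 1).prod (gaussianReal 0 1)) := by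
    have := hf2.mul_prod (integrable_const (μ := gaussianReal 0 1) (1:ℝ))
    exact this.congr (Eventually.of_forall fun p => by simp)
  have hsq2 : Integrable (fun p : ℝ × ℝ => f p.2 ^ 2)
      ((gaussianReal 0 1).prod (gaussianReal 0 1)) := by
    have := (integrable_const (μ := gaussianReal 0 1) (1:ℝ)).mul_prod hf2
    exact this.congr (Eventually.of_forall fun p => by simp)
  have hexp : ∀ p : ℝ × ℝ, (f p.1 - f p.2) ^ 2
      = (f p.1 ^ 2 + f p.2 ^ 2) - 2 * (f p.1 * f p.2) := fun p => by ring
  have hadd : Integrable (fun p : ℝ × ℝ => f p.1 ^ 2 + f p.2 ^ 2)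
      ((gaussianReal 0 1).prod (gaussianReal 0 1)) := hsq1.add hsq2
  rw [integral_congr_ae (Eventually.of_forall hexp), integral_sub hadd
    (hprod.const_mul 2), integral_add hsq1 hsq2, integral_const_mul, integral_prod_mul,
    integral_fun_fst (f := fun x => f x ^ 2), integral_fun_snd (f := fun x => f x ^ 2)]
  simp only [probReal_univ, one_smul]
  ring

end GPoincare

open GPoincare in
/-- **Gaussian Poincaré inequality.** If `Z ~ N(0,1)` and `f ∈ C¹(ℝ)` with `f, f' ∈ L²(γ)`
(`γ` the standard Gaussian measure), then `Var(f(Z)) ≤ E[(f'(Z))²]`. -/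
theorem gaussian_poincare (f : ℝ → ℝ) (hf : ContDiff ℝ 1 f)
    (h1 : MemLp f 2 (gaussianReal 0 1)) (h2 : MemLp (deriv f) 2 (gaussianReal 0 1)) :
    ∫ x, f x ^ 2 ∂(gaussianReal 0 1) - (∫ x, f x ∂(gaussianReal 0 1)) ^ 2
      ≤ ∫ x, (deriv f x) ^ 2 ∂(gaussianReal 0 1) := by
  have hd : Continuous (deriv f) := hf.continuous_deriv le_rfl
  have hfint : Integrable f (gaussianReal 0 1) := h1.integrable one_le_two
  have hf2int : Integrable (fun x => f x ^ 2) (gaussianReal 0 1) := h1.integrable_sq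
  have hd2int : Integrable (fun x => (deriv f x) ^ 2) (gaussianReal 0 1) := h2.integrable_sq
  set g : ℝ → ℝ≥0∞ := fun s => ENNReal.ofReal ((deriv f s) ^ 2) with hg_def
  have hg : Measurable g := ((hd.pow 2).measurable).ennreal_ofReal
  have key := master g hg
  -- integrability of the square difference
  have hsqint : Integrable (fun p : ℝ × ℝ => (f p.1 - f p.2) ^ 2)
      ((gaussianReal 0 1).prod (gaussianReal 0 1)) := by
    have hprod : Integrable (fun p : ℝ × ℝ => f p.1 * f p.2)
        ((gaussianReal 0 1).prod (gaussianReal 0 1)) := hfint.mul_prod hfint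
    have hsq1 : Integrable (fun p : ℝ × ℝ => f p.1 ^ 2)
        ((gaussianReal 0 1).prod (gaussianReal 0 1)) :=
      (hf2int.mul_prod (integrable_const (μ := gaussianReal 0 1) (1:ℝ))).congr (Eventually.of_forall fun p => by simp)
    have hsq2 : Integrable (fun p : ℝ × ℝ => f p.2 ^ 2)
        ((gaussianReal 0 1).prod (gaussianReal 0 1)) :=
      ((integrable_const (μ := gaussianReal 0 1) (1:ℝ)).mul_prod hf2int).congr (Eventually.of_forall fun p => by simp)
    exact ((hsq1.add hsq2).sub (hprod.const_mul 2)).congr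
      (Eventually.of_forall fun p => by simp; ring)
  have h2l : ∫ p : ℝ × ℝ, (f p.1 - f p.2) ^ 2 ∂((gaussianReal 0 1).prod (gaussianReal 0 1))
      = (∫⁻ p : ℝ × ℝ, ENNReal.ofReal ((f p.1 - f p.2) ^ 2)
          ∂((gaussianReal 0 1).prod (gaussianReal 0 1))).toReal := by
    rw [integral_eq_lintegral_of_nonneg_ae (Eventually.of_forall fun p => sq_nonneg _) hsqint.1]
  have hmono : ∫⁻ p : ℝ × ℝ, ENNReal.ofReal ((f p.1 - f p.2) ^ 2)
        ∂((gaussianReal 0 1).prod (gaussianReal 0 1))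
      ≤ 2 * ∫⁻ s, g s ∂(gaussianReal 0 1) := by
    rw [← key]
    exact lintegral_mono fun p => pointwise_bound hf p.1 p.2
  have hgval : ∫⁻ s, g s ∂(gaussianReal 0 1)
      = ENNReal.ofReal (∫ s, (deriv f s) ^ 2 ∂(gaussianReal 0 1)) :=
    (ofReal_integral_eq_lintegral_ofReal hd2int
      (Eventually.of_forall fun s => sq_nonneg _)).symm
  have hRHSnn : (0:ℝ) ≤ ∫ s, (deriv f s) ^ 2 ∂(gaussianReal 0 1) :=
    integral_nonneg fun s => sq_nonneg _
  rw [variance_identity hfint hf2int, h2l]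
  have hfin : (2 : ℝ≥0∞) * ENNReal.ofReal (∫ s, (deriv f s) ^ 2 ∂(gaussianReal 0 1)) ≠ ⊤ :=
    ENNReal.mul_ne_top (by norm_num) ENNReal.ofReal_ne_top
  have hto : (∫⁻ p : ℝ × ℝ, ENNReal.ofReal ((f p.1 - f p.2) ^ 2)
        ∂((gaussianReal 0 1).prod (gaussianReal 0 1))).toReal
      ≤ 2 * ∫ s, (deriv f s) ^ 2 ∂(gaussianReal 0 1) := by
    have hmono' : ∫⁻ p : ℝ × ℝ, ENNReal.ofReal ((f p.1 - f p.2) ^ 2)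
          ∂((gaussianReal 0 1).prod (gaussianReal 0 1))
        ≤ 2 * ENNReal.ofReal (∫ s, (deriv f s) ^ 2 ∂(gaussianReal 0 1)) :=
      le_trans hmono (le_of_eq (by rw [hgval]))
    have := ENNReal.toReal_mono hfin hmono'
    rwa [ENNReal.toReal_mul, ENNReal.toReal_ofReal hRHSnn, ENNReal.toReal_ofNat] at this
  linarith
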